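/- Let M be a closed subspace of a Hilbert space K invariant under a contraction family: suppose S_1,…,S_n : K → K satisfy S_s M ⊆ M and adjoint(S_s) ∘ S_t = δ_{st} • 1 (orthogonal-range isometries). Then P_M − ∑_s S_s P_M S_s* ≥ 0, where P_M is the orthogonal projection onto M. -/

import Mathlib

open ContinuousLinearMap

local notation "⟪" x ", " y "⟫" => @inner ℂ _ _ x y

section Aux
variable {K : Type*} [NormedAddCommGroup K] [InnerProductSpace ℂ K] [CompleteSpace K]

lemma aux_inner_self (q : K →L[ℂ] K) (hsa : IsSelfAdjoint q) (hidem : q * q = q) (x : K) :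
    ⟪q x, x⟫ = (‖q x‖ : ℂ)^2 := by
  have hqq : q (q x) = q x := by
    have := DFunLike.congr_fun hidem x
    simpa [ContinuousLinearMap.mul_apply] using this
  have hadj : adjoint q = q := hsa.adjoint_eq
  have h0 : ⟪q x, x - q x⟫ = 0 := by
    calc ⟪q x, x - q x⟫ = ⟪(adjoint q) x, x - q x⟫ := by rw [hadj]
      _ = ⟪x, q (x - q x)⟫ := adjoint_inner_left q (x - q x) x
      _ = 0 := by rw [map_sub, hqq, sub_self, inner_zero_right]
  have h1 : ⟪q x, x⟫ = ⟪q x, q x⟫ + ⟪q x, x - q x⟫ := by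
    rw [← inner_add_right]
    congr 1
    abel
  rw [h1, h0, add_zero, inner_self_eq_norm_sq_to_K]
  norm_cast

lemma aux_norm_le (q : K →L[ℂ] K) (hsa : IsSelfAdjoint q) (hidem : q * q = q) (x : K) :
    ‖q x‖ ≤ ‖x‖ := by
  rcases eq_or_ne (q x) 0 with h | h
  · simp [h]
  have h1 : (‖q x‖ : ℝ)^2 = Complex.re ⟪q x, x⟫ := by
    rw [aux_inner_self q hsa hidem]
    simp [pow_two]
  have h2 : Complex.re ⟪q x, x⟫ ≤ ‖q x‖ * ‖x‖ := by
    calc Complex.re ⟪q x, x⟫ ≤ ‖⟪q x, x⟫‖ := Complex.re_le_norm _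
      _ ≤ ‖q x‖ * ‖x‖ := norm_inner_le_norm _ _
  nlinarith [norm_pos_iff.mpr h, norm_nonneg (q x)]

lemma aux_re_le (q : K →L[ℂ] K) (hsa : IsSelfAdjoint q) (hidem : q * q = q) (x : K) :
    Complex.re ⟪q x, x⟫ ≤ ‖x‖^2 := by
  have h1 : Complex.re ⟪q x, x⟫ = ‖q x‖^2 := by
    rw [aux_inner_self q hsa hidem]
    simp [pow_two]
  rw [h1]
  have := aux_norm_le q hsa hidem x
  nlinarith [norm_nonneg (q x), norm_nonneg x]

end Aux

theorem stmt18 {K : Type*} [NormedAddCommGroup K] [InnerProductSpace ℂ K] [CompleteSpace K]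
    (n : ℕ) (S : Fin n → K →L[ℂ] K)
    (horth : ∀ s t, adjoint (S s) * S t = if s = t then 1 else 0)
    (M : Submodule ℂ K) [CompleteSpace M]
    (hinv : ∀ s, ∀ x ∈ M, S s x ∈ M) :
    ((M.subtypeL ∘L M.orthogonalProjection) -
      ∑ s, S s * (M.subtypeL ∘L M.orthogonalProjection) * adjoint (S s)).IsPositive := by
  set p : K →L[ℂ] K := M.subtypeL ∘L M.orthogonalProjection with hp
  have hpsa : IsSelfAdjoint p := isSelfAdjoint_starProjection M
  have hpidem : p * p = p := by
    ext x
    simp [hp, ContinuousLinearMap.mul_apply, Submodule.orthogonalProjectionOnto_mem_subspace_eq_self,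
      Submodule.starProjection_eq_self_iff]
  have hporth : ∀ x ∈ Mᗮ, p x = 0 := by
    intro x hx
    have : M.orthogonalProjection x = 0 :=
      Submodule.orthogonalProjectionOnto_apply_of_mem_orthogonal hx
    simp [hp, this]
  have hsumsa : IsSelfAdjoint (∑ s, S s * p * adjoint (S s)) := by
    apply Finset.sum_induction _ IsSelfAdjoint (fun a b ha hb => ha.add hb)
      (by simp [IsSelfAdjoint])
    intro s _
    simp only [IsSelfAdjoint, star_mul, star_eq_adjoint, adjoint_adjoint, hpsa.adjoint_eq, mul_assoc]
  constructor
  · exact (hpsa.sub hsumsa).isSymmetric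
  intro x
  change 0 ≤ RCLike.re ⟪(p - ∑ s, S s * p * adjoint (S s)) x, x⟫
  rw [ContinuousLinearMap.sub_apply, inner_sub_left, map_sub, sub_nonneg,
    ContinuousLinearMap.sum_apply, sum_inner, map_sum]
  have hterm : ∀ s : Fin n, Complex.re ⟪(S s * p * adjoint (S s)) x, x⟫
      = ‖p (adjoint (S s) x)‖^2 := by
    intro s
    have h : ⟪(S s * p * adjoint (S s)) x, x⟫ = ⟪p (adjoint (S s) x), adjoint (S s) x⟫ := by
      rw [ContinuousLinearMap.mul_apply, ContinuousLinearMap.mul_apply,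
        ← adjoint_adjoint (S s), adjoint_inner_left, adjoint_adjoint]
    rw [h, aux_inner_self p hpsa hpidem]
    simp [pow_two]
  have hred : ∀ s : Fin n, p (adjoint (S s) x) = p (adjoint (S s) (p x)) := by
    intro s
    have hxpx : x - p x ∈ Mᗮ := Submodule.sub_starProjection_mem_orthogonal (K := M) x
    have hmem : adjoint (S s) (x - p x) ∈ Mᗮ := by
      intro v hv
      rw [adjoint_inner_right]
      exact hxpx _ (hinv s v hv)
    have h0 := hporth _ hmem
    rw [map_sub, map_sub, sub_eq_zero] at h0
    exact h0
  set Q : K →L[ℂ] K := ∑ s, S s * adjoint (S s) with hQ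
  have hQsa : IsSelfAdjoint Q := by
    apply Finset.sum_induction _ IsSelfAdjoint (fun a b ha hb => ha.add hb)
      (by simp [IsSelfAdjoint])
    intro s _
    simp only [IsSelfAdjoint, star_mul, star_eq_adjoint, adjoint_adjoint]
  have hQidem : Q * Q = Q := by
    have key : ∀ s t : Fin n, (S s * adjoint (S s)) * (S t * adjoint (S t))
        = if s = t then S s * adjoint (S s) else 0 := by
      intro s t
      have h := horth s t
      by_cases hst : s = t
      · subst hst
        simp only [if_pos rfl, if_true] at h ⊢
        calc S s * adjoint (S s) * (S s * adjoint (S s))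
            = S s * ((adjoint (S s) * S s) * adjoint (S s)) := by simp only [mul_assoc]
          _ = S s * adjoint (S s) := by rw [h, one_mul]
      · simp only [if_neg hst] at h ⊢
        calc S s * adjoint (S s) * (S t * adjoint (S t))
            = S s * ((adjoint (S s) * S t) * adjoint (S t)) := by simp only [mul_assoc]
          _ = 0 := by rw [h, zero_mul, mul_zero]
    rw [hQ, Finset.sum_mul_sum]
    calc (∑ s, ∑ t, (S s * adjoint (S s)) * (S t * adjoint (S t)))
        = ∑ s : Fin n, ∑ t : Fin n, if s = t then S s * adjoint (S s) else 0 := by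
          exact Finset.sum_congr rfl fun s _ => Finset.sum_congr rfl fun t _ => key s t
      _ = ∑ s, S s * adjoint (S s) := by
          refine Finset.sum_congr rfl fun s _ => ?_
          rw [Finset.sum_ite_eq]
          simp
  calc ∑ s, Complex.re ⟪(S s * p * adjoint (S s)) x, x⟫
      = ∑ s, ‖p (adjoint (S s) (p x))‖^2 := by
        refine Finset.sum_congr rfl fun s _ => ?_
        rw [hterm s, hred s]
    _ ≤ ∑ s, ‖adjoint (S s) (p x)‖^2 := by
        refine Finset.sum_le_sum fun s _ => ?_
        have h := aux_norm_le p hpsa hpidem (adjoint (S s) (p x))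
        nlinarith [norm_nonneg (p (adjoint (S s) (p x)))]
    _ = Complex.re ⟪Q (p x), p x⟫ := by
        rw [hQ, ContinuousLinearMap.sum_apply, sum_inner, Complex.re_sum]
        refine Finset.sum_congr rfl fun s _ => ?_
        rw [ContinuousLinearMap.mul_apply, ← adjoint_adjoint (S s), adjoint_inner_left,
          adjoint_adjoint]
        exact (inner_self_eq_norm_sq (𝕜 := ℂ) _).symm
    _ ≤ ‖p x‖^2 := aux_re_le Q hQsa hQidem (p x)
    _ = Complex.re ⟪p x, x⟫ := by
        rw [aux_inner_self p hpsa hpidem x]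
        simp [pow_two]
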